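/- Let T be a power partial isometry on H. Then the characteristic function of T is given by Θ_T(z) = [∑_{k=1}^∞ P_{H_k} T^{*(k−1)} z^k] restricted to D_T, where P_{H_k} is the orthogonal projection onto the index-k truncated shift space H_k in the Halmos–Wallen decomposition; moreover each coefficient P_{H_k} T^{*(k−1)} restricted to D_T is a partial isometry. -/

import Mathlib

open ContinuousLinearMap

variable {H : Type*} [NormedAddCommGroup H] [InnerProductSpace ℂ H] [CompleteSpace H]

set_option linter.unusedSectionVars false
set_option maxHeartbeats 1000000

lemma hw_swap_pow (x Z : H →L[ℂ] H) (n : ℕ) :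
    x * (x ^ n * Z) = x ^ n * (x * Z) := by
  rw [← mul_assoc, ← pow_succ', pow_succ, mul_assoc]

lemma hw_comm (A B : H →L[ℂ] H) (hst : star A = B)
    (hA : ∀ n : ℕ, A ^ n * B ^ n * A ^ n = A ^ n) (j : ℕ) :
    A * (B ^ (j + 1) * A ^ (j + 1)) = B ^ j * A ^ j * A := by
  have hst' : star B = A := by rw [← hst, star_star]
  have hB : ∀ n : ℕ, B ^ n * A ^ n * B ^ n = B ^ n := by
    intro n
    have := congrArg star (hA n)
    simpa only [star_mul, star_pow, hst, hst', ← mul_assoc] using this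
  have eA : ∀ Z : H →L[ℂ] H, A * (B * (A * Z)) = A * Z := by
    intro Z
    have h1 : A * B * A = A := by simpa using hA 1
    rw [← mul_assoc, ← mul_assoc, h1]
  have key : star (A * (B ^ (j+1) * A ^ (j+1)) - B ^ j * A ^ j * A) *
      (A * (B ^ (j+1) * A ^ (j+1)) - B ^ j * A ^ j * A) = 0 := by
    have hAj : A ^ j * (A * (B ^ j * (B * (A ^ j * A)))) = A ^ j * A := by
      have := hA (j+1); simp only [pow_succ, mul_assoc] at this
      simpa only [hw_swap_pow] using this
    simp only [star_sub, star_mul, star_pow, hst, hst', sub_mul, mul_sub]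
    have cA : ∀ Z : H →L[ℂ] H, A ^ j * (B ^ j * (A ^ j * Z)) = A ^ j * Z := by
      intro Z; rw [← mul_assoc, ← mul_assoc, hA j]
    simp only [pow_succ, mul_assoc, hw_swap_pow]
    rw [eA, hAj, cA]
    simp
  have := (CStarRing.star_mul_self_eq_zero_iff _).mp key
  exact sub_eq_zero.mp this

lemma hw_comm' (A B : H →L[ℂ] H) (hst : star A = B)
    (hA : ∀ n : ℕ, A ^ n * B ^ n * A ^ n = A ^ n) (j : ℕ) :
    B ^ (j + 1) * A ^ (j + 1) * B = B * (B ^ j * A ^ j) := by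
  have hst' : star B = A := by rw [← hst, star_star]
  have := congrArg star (hw_comm A B hst hA j)
  simpa only [star_mul, star_pow, hst, hst', mul_assoc] using this

section
variable (A B : H →L[ℂ] H) (hst : star A = B)
  (hA : ∀ n : ℕ, A ^ n * B ^ n * A ^ n = A ^ n)
  (hB : ∀ n : ℕ, B ^ n * A ^ n * B ^ n = B ^ n)
include hst hA

lemma hw_stepE (j : ℕ) :
    (B ^ j * A ^ j) * B = B * (B ^ (j - 1) * A ^ (j - 1)) := by
  cases j with
  | zero => simp
  | succ j => simpa using hw_comm' A B hst hA j

lemma hw_pushE (m j : ℕ) :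
    (B ^ j * A ^ j) * B ^ m = B ^ m * (B ^ (j - m) * A ^ (j - m)) := by
  induction m generalizing j with
  | zero => simp
  | succ m ih =>
    rw [pow_succ' B m, ← mul_assoc, hw_stepE A B hst hA j, mul_assoc,
      ih (j - 1), ← mul_assoc, ← pow_succ' B m, Nat.sub_sub, Nat.add_comm 1 m]

include hB in
lemma hw_stepF (j : ℕ) :
    (A ^ j * B ^ j) * B = B * (A ^ (j + 1) * B ^ (j + 1)) := by
  have hst' : star B = A := by rw [← hst, star_star]
  exact (hw_comm B A hst' hB j).symm

include hB in
lemma hw_pushF (m j : ℕ) :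
    (A ^ j * B ^ j) * B ^ m = B ^ m * (A ^ (j + m) * B ^ (j + m)) := by
  induction m generalizing j with
  | zero => simp
  | succ m ih =>
    rw [pow_succ' B m, ← mul_assoc, hw_stepF A B hst hA hB j, mul_assoc,
      ih (j + 1), ← mul_assoc, ← pow_succ' B m, Nat.add_assoc, Nat.add_comm 1 m]

lemma hw_commEF (k j : ℕ) :
    (B ^ j * A ^ j) * (A ^ k * B ^ k) = (A ^ k * B ^ k) * (B ^ j * A ^ j) := by
  induction k generalizing j with
  | zero => simp
  | succ k ih =>
    have hF : A ^ (k+1) * B ^ (k+1) = A * (A ^ k * B ^ k) * B := by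
      rw [pow_succ' A, pow_succ B]; simp only [mul_assoc]
    have h1 : (B ^ j * A ^ j) * A = A * (B ^ (j+1) * A ^ (j+1)) :=
      (hw_comm A B hst hA j).symm
    have h2 : (B ^ (j+1) * A ^ (j+1)) * B = B * (B ^ j * A ^ j) :=
      hw_comm' A B hst hA j
    rw [hF]
    calc (B ^ j * A ^ j) * (A * (A ^ k * B ^ k) * B)
        = ((B ^ j * A ^ j) * A) * (A ^ k * B ^ k) * B := by simp only [mul_assoc]
      _ = A * ((B ^ (j+1) * A ^ (j+1)) * (A ^ k * B ^ k)) * B := by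
          rw [h1]; simp only [mul_assoc]
      _ = A * ((A ^ k * B ^ k) * (B ^ (j+1) * A ^ (j+1))) * B := by rw [ih (j+1)]
      _ = (A * (A ^ k * B ^ k)) * ((B ^ (j+1) * A ^ (j+1)) * B) := by
          simp only [mul_assoc]
      _ = (A * (A ^ k * B ^ k)) * (B * (B ^ j * A ^ j)) := by rw [h2]
      _ = (A * (A ^ k * B ^ k) * B) * (B ^ j * A ^ j) := by simp only [mul_assoc]
end

/-- The orthogonal projection onto the index-`k` truncated shift summand `H_k`
in the Halmos–Wallen decomposition of a power partial isometry `T`: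
`P_{H_k} = ∑_{n=1}^k (E_{k-n} - E_{k-n+1})(F_{n-1} - F_n)`, where
`E j = T^{*j} T^j` and `F j = T^j T^{*j}`. -/
noncomputable def halmosWallenProj (T : H →L[ℂ] H) (k : ℕ) : H →L[ℂ] H :=
  ∑ n ∈ Finset.Icc 1 k,
    (((adjoint T) ^ (k - n) * T ^ (k - n)) -
      ((adjoint T) ^ (k - n + 1) * T ^ (k - n + 1))) *
    ((T ^ (n - 1) * (adjoint T) ^ (n - 1)) - (T ^ n * (adjoint T) ^ n))

section
variable (T : H →L[ℂ] H)
  (hst : star T = adjoint T)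
  (hA : ∀ n : ℕ, T ^ n * (adjoint T) ^ n * T ^ n = T ^ n)
  (hB : ∀ n : ℕ, (adjoint T) ^ n * T ^ n * (adjoint T) ^ n = (adjoint T) ^ n)
include hst hA hB

lemma hw_key (m : ℕ) :
    halmosWallenProj T (m+1) * (adjoint T) ^ m =
      (adjoint T) ^ m *
        ((1 - adjoint T * T) *
          (T ^ m * (adjoint T) ^ m - T ^ (m+1) * (adjoint T) ^ (m+1))) := by
  set S := adjoint T with hSdef
  rw [halmosWallenProj, Finset.sum_mul,
    Finset.sum_eq_single_of_mem 1 (by simp [Nat.le_add_left])]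
  · have e1 : m + 1 - 1 = m := by omega
    simp only [e1, Nat.sub_self, pow_zero, pow_one, one_mul]
    rw [mul_assoc, sub_mul (1 : H →L[ℂ] H) (T * S) (S ^ m), one_mul]
    have hTS : T * S * S ^ m = S ^ m * (T ^ (m+1) * S ^ (m+1)) := by
      have := hw_pushF T S hst hA hB m 1
      simpa [Nat.add_comm 1 m] using this
    rw [hTS]
    have hW : S ^ m - S ^ m * (T ^ (m+1) * S ^ (m+1)) =
        S ^ m * (T ^ m * S ^ m - T ^ (m+1) * S ^ (m+1)) := by
      have h0 : S ^ m * (T ^ m * S ^ m) = S ^ m := by rw [← mul_assoc, hB m]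
      rw [mul_sub, h0]
    rw [hW, ← mul_assoc, sub_mul (S ^ m * T ^ m), hw_pushE T S hst hA m m,
      hw_pushE T S hst hA m (m+1)]
    have e2 : m - m = 0 := by omega
    have e3 : m + 1 - m = 1 := by omega
    rw [e2, e3]
    simp only [pow_zero, pow_one, one_mul, mul_one]
    have hD : S ^ m - S ^ m * (S * T) = S ^ m * (1 - S * T) := by
      rw [mul_sub, mul_one]
    rw [hD, mul_assoc]
  · intro n hn hne
    have h2 : 2 ≤ n := by
      simp only [Finset.mem_Icc] at hn
      omega
    have hnk : n ≤ m + 1 := by simp only [Finset.mem_Icc] at hn; exact hn.2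
    rw [mul_assoc, sub_mul (T ^ (n-1) * S ^ (n-1)), hw_pushF T S hst hA hB m (n-1),
      hw_pushF T S hst hA hB m n, ← mul_sub, ← mul_assoc,
      sub_mul (S ^ (m+1-n) * T ^ (m+1-n)), hw_pushE T S hst hA m (m+1-n),
      hw_pushE T S hst hA m (m+1-n+1)]
    have e4 : m + 1 - n - m = 0 := by omega
    have e5 : m + 1 - n + 1 - m = 0 := by omega
    rw [e4, e5, sub_self, zero_mul]

lemma hw_hce (k : ℕ) :
    (adjoint T * T) * (T ^ k * (adjoint T) ^ k) =
      (T ^ k * (adjoint T) ^ k) * (adjoint T * T) := by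
  have := hw_commEF T (adjoint T) hst hA k 1
  simpa using this

lemma hw_Didem : ((1 : H →L[ℂ] H) - adjoint T * T) * (1 - adjoint T * T) =
    1 - adjoint T * T := by
  have h1 : (adjoint T * T) * (adjoint T * T) = adjoint T * T := by
    have hb := hB 1
    simp only [pow_one] at hb
    calc (adjoint T * T) * (adjoint T * T) = (adjoint T * T * adjoint T) * T := by
          simp only [mul_assoc]
      _ = adjoint T * T := by rw [hb]
  rw [sub_mul, one_mul, mul_sub, mul_one, h1]
  abel

lemma hw_Fidem (k : ℕ) : (T ^ k * (adjoint T) ^ k) * (T ^ k * (adjoint T) ^ k) =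
    T ^ k * (adjoint T) ^ k := by
  calc (T ^ k * (adjoint T) ^ k) * (T ^ k * (adjoint T) ^ k)
      = (T ^ k * (adjoint T) ^ k * T ^ k) * (adjoint T) ^ k := by
        simp only [mul_assoc]
    _ = T ^ k * (adjoint T) ^ k := by rw [hA k]

lemma hw_key2 (m : ℕ) :
    halmosWallenProj T (m+1) * (adjoint T) ^ m * (1 - adjoint T * T) =
      (adjoint T) ^ m *
        ((1 - T ^ (m+1) * (adjoint T) ^ (m+1)) * (1 - adjoint T * T)) := by
  rw [hw_key T hst hA hB m]
  have hcm := hw_hce T hst hA hB m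
  have hcm1 := hw_hce T hst hA hB (m+1)
  have hWD : (1 - adjoint T * T) *
      (T ^ m * (adjoint T) ^ m - T ^ (m+1) * (adjoint T) ^ (m+1)) =
      (T ^ m * (adjoint T) ^ m - T ^ (m+1) * (adjoint T) ^ (m+1)) *
        (1 - adjoint T * T) := by
    simp only [sub_mul, mul_sub, one_mul, mul_one, hcm, hcm1]
    abel
  have h1 : ((1 - adjoint T * T) *
      (T ^ m * (adjoint T) ^ m - T ^ (m+1) * (adjoint T) ^ (m+1))) *
      (1 - adjoint T * T) =
      (T ^ m * (adjoint T) ^ m - T ^ (m+1) * (adjoint T) ^ (m+1)) *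
        (1 - adjoint T * T) := by
    rw [hWD, mul_assoc, hw_Didem T hst hA hB]
  rw [mul_assoc, h1, ← mul_assoc]
  have hSW : (adjoint T) ^ m *
      (T ^ m * (adjoint T) ^ m - T ^ (m+1) * (adjoint T) ^ (m+1)) =
      (adjoint T) ^ m * (1 - T ^ (m+1) * (adjoint T) ^ (m+1)) := by
    have h0 : (adjoint T) ^ m * (T ^ m * (adjoint T) ^ m) = (adjoint T) ^ m := by
      rw [← mul_assoc, hB m]
    rw [mul_sub, h0, mul_sub, mul_one]
  rw [hSW, mul_assoc]

lemma hw_part2 (m : ℕ) :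
    halmosWallenProj T (m+1) * (adjoint T) ^ m * (1 - adjoint T * T) *
      adjoint (halmosWallenProj T (m+1) * (adjoint T) ^ m * (1 - adjoint T * T)) *
      (halmosWallenProj T (m+1) * (adjoint T) ^ m * (1 - adjoint T * T)) =
      halmosWallenProj T (m+1) * (adjoint T) ^ m * (1 - adjoint T * T) := by
  have hC := hw_key2 T hst hA hB m
  have hstS : star (adjoint T) = T := by rw [star_eq_adjoint, adjoint_adjoint]
  have hadj : adjoint (halmosWallenProj T (m+1) * (adjoint T) ^ m *
      (1 - adjoint T * T)) =
      ((1 - adjoint T * T) * ((1 - T ^ (m+1) * (adjoint T) ^ (m+1)) * T ^ m)) := by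
    rw [← star_eq_adjoint, hC]
    simp only [star_mul, star_sub, star_one, star_pow, hst, hstS]
    simp only [mul_assoc]
  rw [hadj, hC]
  have hcm := hw_hce T hst hA hB m
  have hcm1 := hw_hce T hst hA hB (m+1)
  set S := adjoint T with hSdef
  set G := (1 : H →L[ℂ] H) - T ^ (m+1) * S ^ (m+1) with hGdef
  set D := (1 : H →L[ℂ] H) - S * T with hDdef
  have cDD : ∀ Z : H →L[ℂ] H, D * (D * Z) = D * Z := by
    intro Z; rw [← mul_assoc, hw_Didem T hst hA hB]
  have hGG : G * G = G := by
    rw [hGdef, sub_mul, one_mul, mul_sub, mul_one, hw_Fidem T hst hA hB (m+1)]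
    abel
  have cGG : ∀ Z : H →L[ℂ] H, G * (G * Z) = G * Z := by
    intro Z; rw [← mul_assoc, hGG]
  have hDG : D * G = G * D := by
    rw [hGdef, hDdef]
    simp only [sub_mul, mul_sub, one_mul, mul_one, hcm1]
    abel
  have cDG : ∀ Z : H →L[ℂ] H, D * (G * Z) = G * (D * Z) := by
    intro Z; rw [← mul_assoc, hDG, mul_assoc]
  have cDF : ∀ Z : H →L[ℂ] H,
      D * (T ^ m * (S ^ m * Z)) = T ^ m * (S ^ m * (D * Z)) := by
    intro Z
    have h0 : D * (T ^ m * S ^ m) = (T ^ m * S ^ m) * D := by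
      rw [hDdef]
      simp only [sub_mul, mul_sub, one_mul, mul_one, hcm]
    calc D * (T ^ m * (S ^ m * Z)) = (D * (T ^ m * S ^ m)) * Z := by
          simp only [mul_assoc]
      _ = ((T ^ m * S ^ m) * D) * Z := by rw [h0]
      _ = T ^ m * (S ^ m * (D * Z)) := by simp only [mul_assoc]
  have cF : ∀ Z : H →L[ℂ] H,
      (T ^ (m+1) * S ^ (m+1)) * (T ^ m * (S ^ m * Z)) =
        (T ^ (m+1) * S ^ (m+1)) * Z := by
    intro Z
    have hdec : (T ^ (m+1) * S ^ (m+1)) * (T ^ m * S ^ m) =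
        T ^ (m+1) * S ^ (m+1) := by
      calc (T ^ (m+1) * S ^ (m+1)) * (T ^ m * S ^ m)
          = T ^ (m+1) * (S * ((S ^ m * T ^ m) * S ^ m)) := by
            rw [pow_succ' S m]; simp only [mul_assoc]
        _ = T ^ (m+1) * (S * S ^ m) := by rw [hB m]
        _ = T ^ (m+1) * S ^ (m+1) := by rw [← pow_succ' S m]
    calc (T ^ (m+1) * S ^ (m+1)) * (T ^ m * (S ^ m * Z))
        = ((T ^ (m+1) * S ^ (m+1)) * (T ^ m * S ^ m)) * Z := by
          simp only [mul_assoc]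
      _ = (T ^ (m+1) * S ^ (m+1)) * Z := by rw [hdec]
  have hFGD : (T ^ (m+1) * S ^ (m+1)) * (G * D) = 0 := by
    have h1 : (T ^ (m+1) * S ^ (m+1)) * G = 0 := by
      rw [hGdef, mul_sub, mul_one, hw_Fidem T hst hA hB (m+1), sub_self]
    rw [← mul_assoc, h1, zero_mul]
  have hSmF : S ^ m * (T ^ m * (S ^ m * (G * D))) = S ^ m * (G * D) := by
    calc S ^ m * (T ^ m * (S ^ m * (G * D)))
        = (S ^ m * T ^ m * S ^ m) * (G * D) := by simp only [mul_assoc]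
      _ = S ^ m * (G * D) := by rw [hB m]
  calc S ^ m * (G * D) * (D * (G * T ^ m)) * (S ^ m * (G * D))
      = S ^ m * (G * (D * (D * (G * (T ^ m * (S ^ m * (G * D))))))) := by
        simp only [mul_assoc]
    _ = S ^ m * (G * (D * (G * (T ^ m * (S ^ m * (G * D)))))) := by rw [cDD]
    _ = S ^ m * (G * (G * (D * (T ^ m * (S ^ m * (G * D)))))) := by rw [cDG]
    _ = S ^ m * (G * (D * (T ^ m * (S ^ m * (G * D))))) := by rw [cGG]
    _ = S ^ m * (G * (T ^ m * (S ^ m * (D * (G * D))))) := by rw [cDF]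
    _ = S ^ m * (G * (T ^ m * (S ^ m * (G * (D * D))))) := by rw [cDG]
    _ = S ^ m * (G * (T ^ m * (S ^ m * (G * D)))) := by
        rw [hw_Didem T hst hA hB]
    _ = S ^ m * (T ^ m * (S ^ m * (G * D)) -
          (T ^ (m+1) * S ^ (m+1)) * (T ^ m * (S ^ m * (G * D)))) := by
        rw [hGdef, sub_mul, one_mul]
    _ = S ^ m * (T ^ m * (S ^ m * (G * D)) - 0) := by
        rw [cF, hFGD]
    _ = S ^ m * (G * D) := by rw [sub_zero, hSmF]

lemma hw_coeff (k : ℕ) :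
    (1 - T * adjoint T) * (adjoint T) ^ k * (1 - adjoint T * T) =
      (adjoint T) ^ k * ((1 - T ^ (k+1) * (adjoint T) ^ (k+1)) * (1 - adjoint T * T)) := by
  have hTS : (T * adjoint T) * (adjoint T) ^ k =
      (adjoint T) ^ k * (T ^ (k+1) * (adjoint T) ^ (k+1)) := by
    have := hw_pushF T (adjoint T) hst hA hB k 1
    simpa [Nat.add_comm 1 k] using this
  have h2 : (adjoint T) ^ k - (adjoint T) ^ k * (T ^ (k+1) * (adjoint T) ^ (k+1)) =
      (adjoint T) ^ k * (1 - T ^ (k+1) * (adjoint T) ^ (k+1)) := by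
    rw [mul_sub, mul_one]
  rw [sub_mul, one_mul, hTS, h2, mul_assoc]

lemma hw_TD0 : T * (1 - adjoint T * T) = 0 := by
  have h1 := hA 1
  simp only [pow_one] at h1
  rw [mul_sub, mul_one, ← mul_assoc, h1, sub_self]
end

/-- The characteristic function of a power partial isometry `T` is
`Θ_T(z) = (∑_{k ≥ 1} P_{H_k} T^{*(k-1)} z^k)|_{D_T}`, where
`Θ_T(z) = (-T + z D_{T^*} (I - z T^*)⁻¹ D_T)|_{D_T}` with `D_T = I - T^* T` and
`D_{T^*} = I - T T^*` (projections, as `T` is a partial isometry), and the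
restriction to the defect space `D_T` is implemented by composing with the
projection `I - T^* T`.  Moreover each coefficient `P_{H_k} T^{*(k-1)}|_{D_T}`
is a partial isometry. -/
theorem characteristic_function_of_power_partial_isometry
    (T : H →L[ℂ] H)
    (hT : ∀ n : ℕ, 1 ≤ n → (T ^ n) * adjoint (T ^ n) * (T ^ n) = T ^ n) :
    (∀ z : ℂ, ‖z‖ < 1 → ∀ x : H,
      HasSum
        (fun k : ℕ =>
          z ^ (k + 1) •
            (halmosWallenProj T (k + 1)) (((adjoint T) ^ k) ((1 - adjoint T * T) x)))
        (((-T + z • ((1 - T * adjoint T) *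
            Ring.inverse (1 - z • adjoint T) * (1 - adjoint T * T)))
          * (1 - adjoint T * T)) x)) ∧
    (∀ k : ℕ, 1 ≤ k →
      (halmosWallenProj T k * (adjoint T) ^ (k - 1) * (1 - adjoint T * T)) *
        adjoint (halmosWallenProj T k * (adjoint T) ^ (k - 1) * (1 - adjoint T * T)) *
        (halmosWallenProj T k * (adjoint T) ^ (k - 1) * (1 - adjoint T * T))
      = halmosWallenProj T k * (adjoint T) ^ (k - 1) * (1 - adjoint T * T)) := by
  have hst : star T = adjoint T := star_eq_adjoint T
  have adj_pow : ∀ n : ℕ, adjoint (T ^ n) = (adjoint T) ^ n := fun n => by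
    rw [← star_eq_adjoint, star_pow, star_eq_adjoint]
  have hA : ∀ n : ℕ, T ^ n * (adjoint T) ^ n * T ^ n = T ^ n := by
    intro n
    cases n with
    | zero => simp
    | succ n => rw [← adj_pow]; exact hT (n+1) (by omega)
  have hB : ∀ n : ℕ, (adjoint T) ^ n * T ^ n * (adjoint T) ^ n = (adjoint T) ^ n := by
    intro n
    have := congrArg star (hA n)
    simpa only [star_mul, star_pow, star_eq_adjoint, adjoint_adjoint,
      ← mul_assoc] using this
  constructor
  · intro z hz x
    -- norm estimates
    have hEE : (adjoint T * T) * (adjoint T * T) = adjoint T * T := by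
      have hb := hB 1
      simp only [pow_one] at hb
      calc (adjoint T * T) * (adjoint T * T)
          = (adjoint T * T * adjoint T) * T := by simp only [mul_assoc]
        _ = adjoint T * T := by rw [hb]
    have hEsa : star (adjoint T * T) = adjoint T * T := by
      rw [star_mul, hst, star_eq_adjoint, adjoint_adjoint]
    have hnE : ‖adjoint T * T‖ ≤ 1 := by
      have h1 : ‖star (adjoint T * T) * (adjoint T * T)‖ =
          ‖adjoint T * T‖ * ‖adjoint T * T‖ := CStarRing.norm_star_mul_self
      rw [hEsa, hEE] at h1
      by_contra hc
      push_neg at hc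
      nlinarith [norm_nonneg (adjoint T * T)]
    have hTle : ‖T‖ ≤ 1 := by
      have h2 : ‖star T * T‖ = ‖T‖ * ‖T‖ := CStarRing.norm_star_mul_self
      rw [hst] at h2
      by_contra hc
      push_neg at hc
      nlinarith [norm_nonneg T]
    have hS1 : ‖adjoint T‖ ≤ 1 := by rw [← hst, norm_star]; exact hTle
    have hnorm : ‖z • adjoint T‖ < 1 := by
      rw [norm_smul]
      calc ‖z‖ * ‖adjoint T‖ ≤ ‖z‖ * 1 :=
            mul_le_mul_of_nonneg_left hS1 (norm_nonneg z)
        _ = ‖z‖ := mul_one _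
        _ < 1 := hz
    have h0 := hasSum_geom_series_inverse (z • adjoint T) hnorm
    have h1 := (ContinuousLinearMap.apply ℂ H ((1 - adjoint T * T) x)).hasSum h0
    have h2 := ((1 - T * adjoint T) : H →L[ℂ] H).hasSum h1
    have h3 := h2.const_smul z
    have hpt : ∀ n : ℕ,
        (halmosWallenProj T (n+1)) (((adjoint T) ^ n) ((1 - adjoint T * T) x)) =
          (1 - T * adjoint T) (((adjoint T) ^ n) ((1 - adjoint T * T) x)) := by
      intro n
      have hop : halmosWallenProj T (n+1) * (adjoint T) ^ n * (1 - adjoint T * T) =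
          (1 - T * adjoint T) * (adjoint T) ^ n * (1 - adjoint T * T) :=
        (hw_key2 T hst hA hB n).trans (hw_coeff T hst hA hB n).symm
      have := congrArg (fun (M : H →L[ℂ] H) => M x) hop
      simpa only [mul_apply_eq_comp] using this
    have hval : ((-T + z • ((1 - T * adjoint T) *
        Ring.inverse (1 - z • adjoint T) * (1 - adjoint T * T)))
          * (1 - adjoint T * T)) x
        = z • ((1 - T * adjoint T)
            ((Ring.inverse (1 - z • adjoint T)) ((1 - adjoint T * T) x))) := by
      have hop : (-T + z • ((1 - T * adjoint T) *
          Ring.inverse (1 - z • adjoint T) * (1 - adjoint T * T)))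
            * (1 - adjoint T * T)
          = z • ((1 - T * adjoint T) *
              Ring.inverse (1 - z • adjoint T) * (1 - adjoint T * T)) := by
        rw [add_mul, neg_mul, hw_TD0 T hst hA hB, neg_zero, zero_add,
          smul_mul_assoc,
          mul_assoc ((1 - T * adjoint T) * Ring.inverse (1 - z • adjoint T)),
          hw_Didem T hst hA hB]
      rw [hop]
      simp only [ContinuousLinearMap.smul_apply, mul_apply_eq_comp]
    rw [hval]
    have h4 : (fun k : ℕ =>
        z ^ (k + 1) •
          (halmosWallenProj T (k + 1)) (((adjoint T) ^ k) ((1 - adjoint T * T) x)))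
        = fun n : ℕ => z • ((1 - T * adjoint T)
            ((ContinuousLinearMap.apply ℂ H ((1 - adjoint T * T) x))
              ((z • adjoint T) ^ n))) := by
      funext n
      rw [ContinuousLinearMap.apply_apply, smul_pow,
        ContinuousLinearMap.smul_apply, map_smul, smul_smul, ← pow_succ', hpt n]
    rw [h4]
    exact h3
  · intro k hk
    obtain ⟨m, rfl⟩ : ∃ m, k = m + 1 := ⟨k - 1, by omega⟩
    simpa using hw_part2 T hst hA hB m
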